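/- Let p be a prime and n ≥ 1, and let M, M' ∈ Sym_n(ℤ_p) be nonsingular. Then the paired cokernels (Cok(M),⟨·,·⟩) and (Cok(M'),⟨·,·⟩) are isomorphic if and only if there exists a nonsingular M'' ∈ Sym_n(ℤ_p) such that M'' is congruent to M' and every entry of M⁻¹ − (M'')⁻¹ lies in ℤ_p (i.e. M⁻¹ − (M'')⁻¹ ∈ Sym_n(ℤ_p), the inverses being taken over ℚ_p). -/

import Mathlib

open Matrix MeasureTheory

/-- Congruence of square matrices over `R`: `B = U * A * Uᵀ` for some `U ∈ GL`. -/
def Matrix.Congruent {R : Type*} [CommRing R] {ι : Type*} [Fintype ι] [DecidableEq ι]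
    (A B : Matrix ι ι R) : Prop :=
  ∃ U : (Matrix ι ι R)ˣ, (U : Matrix ι ι R) * A * (U : Matrix ι ι R)ᵀ = B

/-- Congruence of square matrices indexed by two (necessarily equipotent) index types. -/
def Matrix.CongruentTo {R : Type*} [CommRing R] {ι κ : Type*} [Fintype ι] [DecidableEq ι]
    [Fintype κ] [DecidableEq κ] (A : Matrix ι ι R) (B : Matrix κ κ R) : Prop :=
  ∃ e : ι ≃ κ, (A.submatrix e.symm e.symm).Congruent B

/-- The cokernel `R^ι / M R^ι` of a square matrix `M`. -/
abbrev Matrix.Cok {R : Type*} [CommRing R] {ι : Type*} [Fintype ι] (M : Matrix ι ι R) :=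
  (ι → R) ⧸ LinearMap.range M.mulVecLin

/-- The pairing value `Xᵀ M⁻¹ Y ∈ ℚ_p`, the inverse being taken over `ℚ_p`. -/
noncomputable def pairVal {p : ℕ} [Fact p.Prime] {ι : Type*} [Fintype ι] [DecidableEq ι]
    (M : Matrix ι ι ℤ_[p]) (X Y : ι → ℤ_[p]) : ℚ_[p] :=
  (fun i => (X i : ℚ_[p])) ⬝ᵥ ((M.map (fun a => (a : ℚ_[p])))⁻¹).mulVec (fun i => (Y i : ℚ_[p]))

/-- Isomorphism of cokernels together with their symmetric pairings: a group isomorphism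
`Cok M ≃ Cok M'` such that for any lifts, the pairing values agree modulo `ℤ_p`. -/
def PairedIso {p : ℕ} [Fact p.Prime] {ι κ : Type*} [Fintype ι] [DecidableEq ι] [Fintype κ]
    [DecidableEq κ] (M : Matrix ι ι ℤ_[p]) (M' : Matrix κ κ ℤ_[p]) : Prop :=
  ∃ e : M.Cok ≃+ M'.Cok,
    ∀ (X Y : ι → ℤ_[p]) (X' Y' : κ → ℤ_[p]),
      e (Submodule.Quotient.mk X) = Submodule.Quotient.mk X' →
      e (Submodule.Quotient.mk Y) = Submodule.Quotient.mk Y' →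
      ‖pairVal M X Y - pairVal M' X' Y'‖ ≤ 1

/-! ### Auxiliary general lemmas -/

section FieldLemma

-- relative complement: if a ⊔ b = ⊤ then ∃ w ≤ b, IsCompl a w
lemma exists_compl_le {K V : Type*} [Field K] [AddCommGroup V] [Module K V]
    (a b : Submodule K V) (h : a ⊔ b = ⊤) : ∃ w : Submodule K V, w ≤ b ∧ IsCompl a w := by
  obtain ⟨T, hT⟩ := Submodule.exists_isCompl ((a ⊓ b).comap b.subtype)
  refine ⟨T.map b.subtype, Submodule.map_subtype_le _ _, ?_, ?_⟩
  · rw [disjoint_iff]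
    ext x
    simp only [Submodule.mem_inf, Submodule.mem_bot, Submodule.mem_map]
    constructor
    · rintro ⟨hxa, ⟨t, htT, rfl⟩⟩
      have : t ∈ ((a ⊓ b).comap b.subtype) ⊓ T := by
        refine ⟨?_, htT⟩
        exact Submodule.mem_comap.mpr ⟨hxa, t.2⟩
      rw [hT.inf_eq_bot] at this
      rw [Submodule.mem_bot] at this
      simp [this]
    · rintro rfl; exact ⟨zero_mem _, 0, zero_mem _, rfl⟩
  · rw [codisjoint_iff]
    have hb : b ≤ a ⊔ T.map b.subtype := by
      intro y hy
      have : (⟨y, hy⟩ : b) ∈ ((a ⊓ b).comap b.subtype) ⊔ T := by rw [hT.sup_eq_top]; trivial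
      obtain ⟨s, hs, t, ht, hst⟩ := Submodule.mem_sup.mp this
      have : y = (s : V) + (t : V) := by
        have := congrArg (b.subtype) hst; simpa using this.symm
      rw [this]
      exact add_mem (Submodule.mem_sup_left (Submodule.mem_comap.mp hs).1)
        (Submodule.mem_sup_right ⟨t, ht, rfl⟩)
    rw [eq_top_iff, ← h]
    exact sup_le le_sup_left (le_trans hb (by exact sup_le le_sup_left le_sup_right))

lemma exists_corr {K V : Type*} [Field K] [AddCommGroup V] [Module K V] [FiniteDimensional K V]
    (f g : V →ₗ[K] V) (h : LinearMap.range f ⊔ LinearMap.range g = ⊤) :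
    ∃ hmap : V →ₗ[K] V, Function.Injective (f + g ∘ₗ hmap) := by
  obtain ⟨K₁, hK⟩ := Submodule.exists_isCompl (LinearMap.ker f)
  obtain ⟨W, hWg, hWc⟩ := exists_compl_le (LinearMap.range f) (LinearMap.range g) h
  have hd1 : Module.finrank K (LinearMap.range f) + Module.finrank K (LinearMap.ker f)
      = Module.finrank K V := LinearMap.finrank_range_add_finrank_ker f
  have hd2 : Module.finrank K (LinearMap.range f) + Module.finrank K W
      = Module.finrank K V := Submodule.finrank_add_eq_of_isCompl hWc
  have hdim : Module.finrank K (LinearMap.ker f) = Module.finrank K W := by omega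
  obtain ⟨φ⟩ := FiniteDimensional.nonempty_linearEquiv_of_finrank_eq hdim
  obtain ⟨s, hs⟩ := Module.projective_lifting_property g.rangeRestrict
    (Submodule.inclusion hWg) g.surjective_rangeRestrict
  have hgs : ∀ w : W, g (s w) = (w : V) := by
    intro w
    have := congrArg (fun m => ((m w : LinearMap.range g) : V)) hs
    simpa using this
  set π₀ := (LinearMap.ker f).linearProjOfIsCompl K₁ hK with hπ₀
  refine ⟨s ∘ₗ (φ : LinearMap.ker f →ₗ[K] W) ∘ₗ π₀, ?_⟩
  rw [← LinearMap.ker_eq_bot]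
  rw [LinearMap.ker_eq_bot']
  intro x hx
  simp only [LinearMap.add_apply, LinearMap.comp_apply] at hx
  have hmem : f x ∈ LinearMap.range f := LinearMap.mem_range_self f x
  have hmem2 : ((φ (π₀ x) : W) : V) ∈ W := (φ (π₀ x)).2
  rw [hgs] at hx
  have hfx : f x = 0 := by
    have : f x ∈ W := by
      have : f x = -((φ (π₀ x) : W) : V) := by
        rw [eq_neg_iff_add_eq_zero]; exact hx
      rw [this]; exact neg_mem hmem2
    exact Submodule.disjoint_def.mp hWc.disjoint _ hmem this
  have hw : ((φ (π₀ x) : W) : V) = 0 := by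
    rw [hfx, zero_add] at hx; exact hx
  have hπx : π₀ x = 0 := by
    have : (φ (π₀ x) : W) = 0 := Subtype.coe_injective hw
    exact φ.injective (by simpa using this)
  have hxK₁ : x ∈ K₁ :=
    (Submodule.linearProjOfIsCompl_apply_eq_zero_iff hK).mp hπx
  have hxker : x ∈ LinearMap.ker f := LinearMap.mem_ker.mpr hfx
  exact Submodule.disjoint_def.mp hK.disjoint _ hxker hxK₁

lemma exists_corr_matrix {K : Type*} [Field K] {n : ℕ} (f g : Matrix (Fin n) (Fin n) K)
    (h : ∀ y : Fin n → K, ∃ x z, f.mulVec x + g.mulVec z = y) :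
    ∃ c : Matrix (Fin n) (Fin n) K, (f + g * c).det ≠ 0 := by
  have hsup : LinearMap.range f.mulVecLin ⊔ LinearMap.range g.mulVecLin = ⊤ := by
    rw [eq_top_iff]
    rintro y -
    obtain ⟨x, z, hxz⟩ := h y
    exact Submodule.mem_sup.mpr ⟨_, ⟨x, rfl⟩, _, ⟨z, rfl⟩, hxz⟩
  obtain ⟨hmap, hinj⟩ := exists_corr f.mulVecLin g.mulVecLin hsup
  refine ⟨LinearMap.toMatrix' hmap, ?_⟩
  intro hdet
  obtain ⟨v, hv, hv0⟩ := (Matrix.exists_mulVec_eq_zero_iff).mpr hdet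
  apply hv
  apply hinj
  have hm : hmap v = (LinearMap.toMatrix' hmap).mulVec v := by
    rw [← Matrix.toLin'_apply, Matrix.toLin'_toMatrix']
  show (f.mulVecLin + g.mulVecLin ∘ₗ hmap) v = (f.mulVecLin + g.mulVecLin ∘ₗ hmap) 0
  simp only [LinearMap.add_apply, LinearMap.comp_apply, Matrix.mulVecLin_apply, hm, map_zero,
    Matrix.mulVec_zero, add_zero, Matrix.mulVec_mulVec]
  rwa [Matrix.add_mulVec] at hv0

end FieldLemma

section PadicAux

variable {p : ℕ} [Fact p.Prime]

lemma zmod_lift (x : ZMod p) : PadicInt.toZMod ((x.val : ℤ_[p])) = x := by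
  rw [map_natCast]
  simp [ZMod.natCast_val, ZMod.cast_id]

lemma isUnit_of_toZMod_ne_zero (x : ℤ_[p]) (h : PadicInt.toZMod x ≠ 0) : IsUnit x := by
  by_contra hu
  apply h
  rw [← RingHom.mem_ker, PadicInt.ker_toZMod]
  exact hu

lemma exists_corr_padic {n : ℕ} (V M' : Matrix (Fin n) (Fin n) ℤ_[p])
    (h : ∀ y : Fin n → ℤ_[p], ∃ x z, V.mulVec x + M'.mulVec z = y) :
    ∃ C : Matrix (Fin n) (Fin n) ℤ_[p], IsUnit (V + M' * C).det := by
  set ρ := (PadicInt.toZMod : ℤ_[p] →+* ZMod p)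
  have hsur : ∀ y : Fin n → ZMod p, ∃ x z,
      (V.map ρ).mulVec x + (M'.map ρ).mulVec z = y := by
    intro y
    obtain ⟨x, z, hxz⟩ := h (fun i => ((y i).val : ℤ_[p]))
    refine ⟨fun i => ρ (x i), fun i => ρ (z i), ?_⟩
    funext i
    have := congrArg (fun v => ρ (v i)) hxz
    simp only [Pi.add_apply] at this
    rw [map_add] at this
    have h1 : ρ ((V.mulVec x) i) = ((V.map ρ).mulVec fun i => ρ (x i)) i := by
      simp [Matrix.mulVec, dotProduct, map_sum, Matrix.map_apply]
    have h2 : ρ ((M'.mulVec z) i) = ((M'.map ρ).mulVec fun i => ρ (z i)) i := by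
      simp [Matrix.mulVec, dotProduct, map_sum, Matrix.map_apply]
    simp only [Pi.add_apply]
    rw [← h1, ← h2, this, zmod_lift]
  obtain ⟨c, hc⟩ := exists_corr_matrix (V.map ρ) (M'.map ρ) hsur
  refine ⟨Matrix.of (fun i j => (((c i j).val : ℤ_[p]))), ?_⟩
  apply isUnit_of_toZMod_ne_zero
  have hmap : (V + M' * Matrix.of (fun i j => (((c i j).val : ℤ_[p])))).map ρ
      = V.map ρ + (M'.map ρ) * c := by
    have hco : (Matrix.of (fun i j => (((c i j).val : ℤ_[p])))).map ρ = c := by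
      ext i j
      simp [Matrix.map_apply, zmod_lift]
    rw [Matrix.map_add _ (map_add ρ), Matrix.map_mul, hco]
  show ρ _ ≠ 0
  rw [RingHom.map_det, RingHom.mapMatrix_apply, hmap]
  exact hc

lemma cok_torsion {n : ℕ} (M : Matrix (Fin n) (Fin n) ℤ_[p]) (hd : M.det ≠ 0) :
    ∃ N : ℕ, ∀ x : M.Cok, ((p : ℤ_[p]) ^ N) • x = 0 := by
  refine ⟨M.det.valuation, ?_⟩
  set k := M.det.valuation with hk
  intro x
  obtain ⟨X, rfl⟩ := Submodule.Quotient.mk_surjective _ x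
  rw [← Submodule.Quotient.mk_smul, Submodule.Quotient.mk_eq_zero]
  have hspec := PadicInt.unitCoeff_spec hd
  set u := PadicInt.unitCoeff hd
  have : ((p : ℤ_[p]) ^ k) • X = ((u⁻¹ : ℤ_[p]ˣ) : ℤ_[p]) • (M.det • X) := by
    rw [smul_smul]
    congr 1
    conv_rhs => rw [hspec, ← mul_assoc, ← hk]
    simp
  rw [this]
  apply Submodule.smul_mem
  refine ⟨(M.adjugate).mulVec X, ?_⟩
  rw [Matrix.mulVecLin_apply, Matrix.mulVec_mulVec, Matrix.mul_adjugate, Matrix.smul_mulVec,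
    Matrix.one_mulVec]

lemma torsion_mono {A : Type*} [AddCommGroup A] [Module ℤ_[p] A] {N K : ℕ}
    (h : ∀ x : A, ((p : ℤ_[p]) ^ N) • x = 0) (hNK : N ≤ K) :
    ∀ x : A, ((p : ℤ_[p]) ^ K) • x = 0 := by
  intro x
  have : ((p : ℤ_[p]) ^ K) = (p : ℤ_[p]) ^ (K - N) * (p : ℤ_[p]) ^ N := by
    rw [← pow_add]; congr 1; omega
  rw [this, mul_smul, h x, smul_zero]

lemma addHom_lin {A B : Type*} [AddCommGroup A] [AddCommGroup B] [Module ℤ_[p] A]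
    [Module ℤ_[p] B] (f : A →+ B) (N : ℕ) (hA : ∀ x : A, ((p : ℤ_[p]) ^ N) • x = 0)
    (hB : ∀ y : B, ((p : ℤ_[p]) ^ N) • y = 0) (a : ℤ_[p]) (x : A) : f (a • x) = a • f x := by
  obtain ⟨b, hb⟩ := Ideal.mem_span_singleton'.mp (PadicInt.appr_spec N a)
  have keyA : a • x = (a.appr N : ℤ_[p]) • x := by
    have h2 : a • x - (a.appr N : ℤ_[p]) • x = (a - a.appr N) • x := by rw [sub_smul]
    rw [← sub_eq_zero, h2, ← hb, mul_comm, mul_smul, hA]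
  have keyB : a • f x = (a.appr N : ℤ_[p]) • f x := by
    have h2 : a • f x - (a.appr N : ℤ_[p]) • f x = (a - a.appr N) • f x := by rw [sub_smul]
    rw [← sub_eq_zero, h2, ← hb, mul_comm, mul_smul, hB]
  rw [keyA, keyB, Nat.cast_smul_eq_nsmul, Nat.cast_smul_eq_nsmul, map_nsmul]

end PadicAux

section QmAux

variable {p : ℕ} [Fact p.Prime] {n : ℕ}

/-- entrywise coercion of a matrix to `ℚ_[p]` -/
noncomputable def qm (N : Matrix (Fin n) (Fin n) ℤ_[p]) : Matrix (Fin n) (Fin n) ℚ_[p] :=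
  N.map (fun a => (a : ℚ_[p]))

noncomputable def qv (X : Fin n → ℤ_[p]) : Fin n → ℚ_[p] := fun i => (X i : ℚ_[p])

lemma qm_eq_mapMatrix (N : Matrix (Fin n) (Fin n) ℤ_[p]) :
    qm N = (PadicInt.Coe.ringHom (p := p)).mapMatrix N := rfl

lemma qm_mul (A B : Matrix (Fin n) (Fin n) ℤ_[p]) : qm (A * B) = qm A * qm B := by
  simp [qm_eq_mapMatrix, _root_.map_mul]

lemma qm_one : qm (1 : Matrix (Fin n) (Fin n) ℤ_[p]) = 1 := by
  simp [qm_eq_mapMatrix]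

lemma qm_add (A B : Matrix (Fin n) (Fin n) ℤ_[p]) : qm (A + B) = qm A + qm B := by
  simp [qm_eq_mapMatrix, map_add]

lemma qm_sub (A B : Matrix (Fin n) (Fin n) ℤ_[p]) : qm (A - B) = qm A - qm B := by
  simp [qm_eq_mapMatrix, map_sub]

lemma qm_transpose (A : Matrix (Fin n) (Fin n) ℤ_[p]) : qm Aᵀ = (qm A)ᵀ := by
  ext i j; simp [qm, Matrix.map_apply]

lemma qm_injective : Function.Injective (qm (p := p) (n := n)) := by
  intro N N' h
  ext i j
  have := congrArg (fun Q => Q i j) h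
  exact Subtype.coe_injective this

lemma qv_mulVec (N : Matrix (Fin n) (Fin n) ℤ_[p]) (X : Fin n → ℤ_[p]) :
    qv (N.mulVec X) = (qm N).mulVec (qv X) := by
  funext i
  exact RingHom.map_mulVec (PadicInt.Coe.ringHom (p := p)) N X i

lemma qv_add (X Y : Fin n → ℤ_[p]) : qv (X + Y) = qv X + qv Y := by
  funext i; simp [qv]

lemma qm_det_isUnit {N : Matrix (Fin n) (Fin n) ℤ_[p]} (h : N.det ≠ 0) : IsUnit (qm N).det := by
  rw [isUnit_iff_ne_zero, qm_eq_mapMatrix, ← RingHom.map_det]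
  intro hc
  apply h
  have : ((N.det : ℤ_[p]) : ℚ_[p]) = 0 := hc
  exact Subtype.coe_injective (by simp [this])

lemma pairVal_eq (M : Matrix (Fin n) (Fin n) ℤ_[p]) (X Y : Fin n → ℤ_[p]) :
    pairVal M X Y = qv X ⬝ᵥ ((qm M)⁻¹).mulVec (qv Y) := rfl

lemma dot_mulVec_mulVec (A B : Matrix (Fin n) (Fin n) ℚ_[p]) (v w : Fin n → ℚ_[p]) :
    (A.mulVec v) ⬝ᵥ (B.mulVec w) = v ⬝ᵥ ((Aᵀ * B).mulVec w) := by
  rw [← Matrix.vecMul_transpose, Matrix.dotProduct_mulVec, Matrix.vecMul_vecMul,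
    ← Matrix.dotProduct_mulVec]

lemma norm_coe_le_one (z : ℤ_[p]) : ‖(z : ℚ_[p])‖ ≤ 1 := z.2

lemma pairVal_add_left (M : Matrix (Fin n) (Fin n) ℤ_[p]) (X X₂ Y : Fin n → ℤ_[p]) :
    pairVal M (X + X₂) Y = pairVal M X Y + pairVal M X₂ Y := by
  simp [pairVal_eq, qv_add, add_dotProduct]

lemma qv_dot (X Y : Fin n → ℤ_[p]) : qv X ⬝ᵥ qv Y = ((X ⬝ᵥ Y : ℤ_[p]) : ℚ_[p]) :=
  (RingHom.map_dotProduct (PadicInt.Coe.ringHom (p := p)) X Y).symm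

lemma pairVal_shift_left {M' : Matrix (Fin n) (Fin n) ℤ_[p]} (hs : M'.IsSymm) (hd : M'.det ≠ 0)
    (Z X Y : Fin n → ℤ_[p]) :
    pairVal M' (M'.mulVec Z + X) Y = ((Z ⬝ᵥ Y : ℤ_[p]) : ℚ_[p]) + pairVal M' X Y := by
  rw [pairVal_add_left]
  congr 1
  rw [pairVal_eq, qv_mulVec, dot_mulVec_mulVec]
  have hT : (qm M')ᵀ = qm M' := by rw [← qm_transpose, hs]
  rw [hT, Matrix.mul_nonsing_inv _ (qm_det_isUnit hd), Matrix.one_mulVec, qv_dot]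

lemma pairVal_shift_right {M' : Matrix (Fin n) (Fin n) ℤ_[p]} (hd : M'.det ≠ 0)
    (X W Y : Fin n → ℤ_[p]) :
    pairVal M' X (M'.mulVec W + Y) = ((X ⬝ᵥ W : ℤ_[p]) : ℚ_[p]) + pairVal M' X Y := by
  rw [pairVal_eq, qv_add, Matrix.mulVec_add, dotProduct_add]
  congr 1
  rw [qv_mulVec, Matrix.mulVec_mulVec, Matrix.nonsing_inv_mul _ (qm_det_isUnit hd),
    Matrix.one_mulVec, qv_dot]

lemma pairVal_congr {U M'' : Matrix (Fin n) (Fin n) ℤ_[p]} (hU : IsUnit U.det)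
    (h'' : M''.det ≠ 0) (X Y : Fin n → ℤ_[p]) :
    pairVal (U * M'' * Uᵀ) (U.mulVec X) (U.mulVec Y) = pairVal M'' X Y := by
  have hUq : IsUnit (qm U).det := qm_det_isUnit (fun h => by simp [h] at hU)
  have hUqT : IsUnit ((qm U)ᵀ).det := by rwa [Matrix.det_transpose]
  rw [pairVal_eq, pairVal_eq, qv_mulVec, qv_mulVec]
  rw [qm_mul, qm_mul, qm_transpose]
  rw [Matrix.mul_inv_rev, Matrix.mul_inv_rev]
  rw [Matrix.mulVec_mulVec, dot_mulVec_mulVec]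
  congr 1
  rw [← Matrix.mul_assoc, ← Matrix.mul_assoc, ← Matrix.mul_assoc]
  rw [Matrix.mul_nonsing_inv _ hUqT, Matrix.one_mul, Matrix.mul_assoc,
    Matrix.nonsing_inv_mul _ hUq, Matrix.mul_one]

lemma qv_single (i : Fin n) : qv (Pi.single i (1 : ℤ_[p])) = Pi.single i (1 : ℚ_[p]) := by
  funext k
  rcases eq_or_ne k i with rfl | hk
  · simp [qv]
  · simp [qv, Pi.single_eq_of_ne hk]

lemma pairVal_single (M : Matrix (Fin n) (Fin n) ℤ_[p]) (i j : Fin n) :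
    pairVal M (Pi.single i 1) (Pi.single j 1) = (qm M)⁻¹ i j := by
  rw [pairVal_eq, qv_single, qv_single, Matrix.mulVec_single, single_dotProduct]
  simp

lemma pairVal_single_mulVec (M' U₁ : Matrix (Fin n) (Fin n) ℤ_[p]) (i j : Fin n) :
    pairVal M' (U₁.mulVec (Pi.single i 1)) (U₁.mulVec (Pi.single j 1))
      = ((qm U₁)ᵀ * (qm M')⁻¹ * qm U₁) i j := by
  rw [pairVal_eq, qv_mulVec, qv_mulVec, dot_mulVec_mulVec, qv_single, qv_single,
    ← Matrix.mulVec_mulVec, Matrix.mulVec_single_one, single_dotProduct]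
  simp only [Matrix.mulVec, Matrix.mul_apply, dotProduct, Matrix.transpose_apply, Matrix.col_apply,
    Finset.sum_mul, Finset.mul_sum]
  rw [Finset.sum_comm]
  ring_nf

end QmAux

section UnitAux

variable {R : Type*} [CommRing R] {n : ℕ}

/-- transpose of a matrix unit -/
def unitT (U : (Matrix (Fin n) (Fin n) R)ˣ) : (Matrix (Fin n) (Fin n) R)ˣ where
  val := (U : Matrix (Fin n) (Fin n) R)ᵀ
  inv := ((U⁻¹ : _ˣ) : Matrix (Fin n) (Fin n) R)ᵀ
  val_inv := by rw [← Matrix.transpose_mul, U.inv_mul, Matrix.transpose_one]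
  inv_val := by rw [← Matrix.transpose_mul, U.mul_inv, Matrix.transpose_one]

/-- the linear equivalence given by an invertible matrix -/
def matUnitEquiv (U : (Matrix (Fin n) (Fin n) R)ˣ) : (Fin n → R) ≃ₗ[R] (Fin n → R) :=
  LinearEquiv.ofLinear (U : Matrix (Fin n) (Fin n) R).mulVecLin
    ((U⁻¹ : _ˣ) : Matrix (Fin n) (Fin n) R).mulVecLin
    (by rw [← Matrix.mulVecLin_mul, U.mul_inv, Matrix.mulVecLin_one])
    (by rw [← Matrix.mulVecLin_mul, U.inv_mul, Matrix.mulVecLin_one])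

lemma matUnitEquiv_apply (U : (Matrix (Fin n) (Fin n) R)ˣ) (x : Fin n → R) :
    matUnitEquiv U x = (U : Matrix (Fin n) (Fin n) R).mulVec x := rfl

lemma range_mulVecLin_unit (U : (Matrix (Fin n) (Fin n) R)ˣ) :
    LinearMap.range ((U : Matrix (Fin n) (Fin n) R).mulVecLin) = ⊤ := by
  rw [LinearMap.range_eq_top]
  intro y
  exact ⟨((U⁻¹ : _ˣ) : Matrix (Fin n) (Fin n) R).mulVec y, by
    rw [Matrix.mulVecLin_apply, Matrix.mulVec_mulVec, U.mul_inv, Matrix.one_mulVec]⟩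

lemma range_mul_unit (N : Matrix (Fin n) (Fin n) R) (U : (Matrix (Fin n) (Fin n) R)ˣ) :
    LinearMap.range ((N * (U : Matrix (Fin n) (Fin n) R)).mulVecLin)
      = LinearMap.range N.mulVecLin := by
  rw [Matrix.mulVecLin_mul]
  exact LinearMap.range_comp_of_range_eq_top _ (range_mulVecLin_unit U)

/-- the equivalence of cokernels induced by `G` when `G` carries `range M` onto `range M'`. -/
noncomputable def cokEquiv (M M' : Matrix (Fin n) (Fin n) R)
    (G : (Matrix (Fin n) (Fin n) R)ˣ)
    (h : LinearMap.range (((G : Matrix (Fin n) (Fin n) R) * M).mulVecLin)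
        = LinearMap.range M'.mulVecLin) : M.Cok ≃ₗ[R] M'.Cok :=
  Submodule.Quotient.equiv _ _ (matUnitEquiv G) (by
    rw [← h, Matrix.mulVecLin_mul, LinearMap.range_comp]
    rfl)

lemma cokEquiv_apply (M M' : Matrix (Fin n) (Fin n) R) (G : (Matrix (Fin n) (Fin n) R)ˣ)
    (h : LinearMap.range (((G : Matrix (Fin n) (Fin n) R) * M).mulVecLin)
        = LinearMap.range M'.mulVecLin) (x : Fin n → R) :
    cokEquiv M M' G h (Submodule.Quotient.mk x)
      = Submodule.Quotient.mk ((G : Matrix (Fin n) (Fin n) R).mulVec x) := by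
  simp [cokEquiv, Submodule.Quotient.equiv_apply, Submodule.mapQ_apply, matUnitEquiv_apply]

end UnitAux

section Main

variable {p : ℕ} [Fact p.Prime] {n : ℕ}

lemma backward_dir (M M' : Matrix (Fin n) (Fin n) ℤ_[p]) (hMs : M.IsSymm) (hM's : M'.IsSymm)
    (hMd : M.det ≠ 0) (hM'd : M'.det ≠ 0) (M'' : Matrix (Fin n) (Fin n) ℤ_[p])
    (hM''s : M''.IsSymm) (hM''d : M''.det ≠ 0) (hcong : M''.Congruent M')
    (hint : ∀ i j, ‖((qm M)⁻¹ - (qm M'')⁻¹) i j‖ ≤ 1) : PairedIso M M' := by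
  obtain ⟨U, hU⟩ := hcong
  set D : Matrix (Fin n) (Fin n) ℚ_[p] := (qm M)⁻¹ - (qm M'')⁻¹ with hD
  set A₀ : Matrix (Fin n) (Fin n) ℤ_[p] := Matrix.of (fun i j => (⟨D i j, hint i j⟩ : ℤ_[p]))
    with hA₀def
  have hA₀ : qm A₀ = D := by ext i j; rfl
  have hAu : IsUnit (qm M).det := qm_det_isUnit hMd
  have hCu : IsUnit (qm M'').det := qm_det_isUnit hM''d
  have hU₀q : qm (1 - M * A₀) = qm M * (qm M'')⁻¹ := by
    rw [qm_sub, qm_one, qm_mul, hA₀, hD, Matrix.mul_sub,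
      Matrix.mul_nonsing_inv _ hAu, sub_sub_cancel]
  have hW₀q : qm (1 + M'' * A₀) = qm M'' * (qm M)⁻¹ := by
    rw [qm_add, qm_one, qm_mul, hA₀, hD, Matrix.mul_sub,
      Matrix.mul_nonsing_inv _ hCu]
    abel
  have hUW : (1 - M * A₀) * (1 + M'' * A₀) = 1 := by
    apply qm_injective
    rw [qm_mul, hU₀q, hW₀q, qm_one, Matrix.mul_assoc, ← Matrix.mul_assoc ((qm M'')⁻¹),
      Matrix.nonsing_inv_mul _ hCu, Matrix.one_mul, Matrix.mul_nonsing_inv _ hAu]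
  have hWU : (1 + M'' * A₀) * (1 - M * A₀) = 1 := by
    apply qm_injective
    rw [qm_mul, hU₀q, hW₀q, qm_one, Matrix.mul_assoc, ← Matrix.mul_assoc ((qm M)⁻¹),
      Matrix.nonsing_inv_mul _ hAu, Matrix.one_mul, Matrix.mul_nonsing_inv _ hCu]
  set U₀ : (Matrix (Fin n) (Fin n) ℤ_[p])ˣ := ⟨1 - M * A₀, 1 + M'' * A₀, hUW, hWU⟩ with hU₀def
  have hMU₀ : M = (U₀ : Matrix (Fin n) (Fin n) ℤ_[p]) * M'' := by
    apply qm_injective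
    show qm M = qm ((1 - M * A₀) * M'')
    rw [qm_mul, hU₀q, Matrix.mul_assoc, Matrix.nonsing_inv_mul _ hCu, Matrix.mul_one]
  have hMsplit : M = M'' * ((unitT U₀ : (Matrix (Fin n) (Fin n) ℤ_[p])ˣ)
      : Matrix (Fin n) (Fin n) ℤ_[p]) := by
    conv_lhs => rw [← hMs, hMU₀, Matrix.transpose_mul, hM''s]
    rfl
  -- the range identity
  have hrange : LinearMap.range (((U : Matrix (Fin n) (Fin n) ℤ_[p]) * M).mulVecLin)
      = LinearMap.range M'.mulVecLin := by
    have h1 : (U : Matrix (Fin n) (Fin n) ℤ_[p]) * M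
        = ((U : Matrix (Fin n) (Fin n) ℤ_[p]) * M'') * ((unitT U₀ : _ˣ) : Matrix _ _ ℤ_[p]) := by
      rw [Matrix.mul_assoc, ← hMsplit]
    have h2 : M' = ((U : Matrix (Fin n) (Fin n) ℤ_[p]) * M'') * ((unitT U : _ˣ)
        : Matrix (Fin n) (Fin n) ℤ_[p]) := by
      rw [← hU]; rfl
    rw [h1, range_mul_unit]
    conv_rhs => rw [h2, range_mul_unit]
  set e := cokEquiv M M' U hrange with hedef
  refine ⟨e.toAddEquiv, ?_⟩
  intro X Y X' Y' hX hY
  have heX : e (Submodule.Quotient.mk X)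
      = Submodule.Quotient.mk ((U : Matrix (Fin n) (Fin n) ℤ_[p]).mulVec X) :=
    cokEquiv_apply M M' U hrange X
  have heY : e (Submodule.Quotient.mk Y)
      = Submodule.Quotient.mk ((U : Matrix (Fin n) (Fin n) ℤ_[p]).mulVec Y) :=
    cokEquiv_apply M M' U hrange Y
  have hX' : (Submodule.Quotient.mk X' : M'.Cok)
      = Submodule.Quotient.mk ((U : Matrix (Fin n) (Fin n) ℤ_[p]).mulVec X) := by
    rw [← heX]; exact hX.symm
  have hY' : (Submodule.Quotient.mk Y' : M'.Cok)
      = Submodule.Quotient.mk ((U : Matrix (Fin n) (Fin n) ℤ_[p]).mulVec Y) := by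
    rw [← heY]; exact hY.symm
  obtain ⟨Z, hZ⟩ := (Submodule.Quotient.eq _).mp hX'
  obtain ⟨W, hW⟩ := (Submodule.Quotient.eq _).mp hY'
  rw [Matrix.mulVecLin_apply] at hZ hW
  have hX'eq : X' = M'.mulVec Z + (U : Matrix (Fin n) (Fin n) ℤ_[p]).mulVec X := by
    exact sub_eq_iff_eq_add.mp hZ.symm
  have hY'eq : Y' = M'.mulVec W + (U : Matrix (Fin n) (Fin n) ℤ_[p]).mulVec Y := by
    exact sub_eq_iff_eq_add.mp hW.symm
  have hUdet : IsUnit (U : Matrix (Fin n) (Fin n) ℤ_[p]).det :=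
    IsUnit.of_mul_eq_one _ (by rw [← Matrix.det_mul, U.mul_inv, Matrix.det_one])
  have h1 : pairVal M' X' Y' = ((Z ⬝ᵥ Y' : ℤ_[p]) : ℚ_[p])
      + ((((U : Matrix (Fin n) (Fin n) ℤ_[p]).mulVec X ⬝ᵥ W : ℤ_[p])) : ℚ_[p])
      + pairVal M'' X Y := by
    conv_lhs => rw [hX'eq, pairVal_shift_left hM's hM'd]
    rw [add_assoc]
    congr 1
    conv_lhs => rw [hY'eq, pairVal_shift_right hM'd]
    congr 1
    rw [← hU]
    exact pairVal_congr hUdet hM''d X Y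
  have h2 : pairVal M X Y = pairVal M'' X Y + ((X ⬝ᵥ A₀.mulVec Y : ℤ_[p]) : ℚ_[p]) := by
    rw [pairVal_eq, pairVal_eq]
    have hinv : (qm M)⁻¹ = (qm M'')⁻¹ + qm A₀ := by rw [hA₀, hD]; abel
    rw [hinv, Matrix.add_mulVec, dotProduct_add, ← qv_mulVec, qv_dot]
  have key : pairVal M X Y - pairVal M' X' Y'
      = (((X ⬝ᵥ A₀.mulVec Y - Z ⬝ᵥ Y'
          - (U : Matrix (Fin n) (Fin n) ℤ_[p]).mulVec X ⬝ᵥ W : ℤ_[p])) : ℚ_[p]) := by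
    rw [h1, h2]
    push_cast
    ring
  rw [show pairVal M X Y - pairVal M' X' Y' = pairVal M X Y - pairVal M' X' Y' from rfl, key]
  exact norm_coe_le_one _



lemma forward_dir (M M' : Matrix (Fin n) (Fin n) ℤ_[p]) (hM's : M'.IsSymm)
    (hMd : M.det ≠ 0) (hM'd : M'.det ≠ 0) (h : PairedIso M M') :
    ∃ M'' : Matrix (Fin n) (Fin n) ℤ_[p], M''.IsSymm ∧ M''.det ≠ 0 ∧
      M''.Congruent M' ∧ ∀ i j, ‖((qm M)⁻¹ - (qm M'')⁻¹) i j‖ ≤ 1 := by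
  obtain ⟨e, he⟩ := h
  -- torsion
  obtain ⟨N₁, hN₁⟩ := cok_torsion M hMd
  obtain ⟨N₂, hN₂⟩ := cok_torsion M' hM'd
  set K := max N₁ N₂ with hK
  have hKA : ∀ x : M.Cok, ((p : ℤ_[p]) ^ K) • x = 0 := torsion_mono hN₁ (le_max_left _ _)
  have hKB : ∀ x : M'.Cok, ((p : ℤ_[p]) ^ K) • x = 0 := torsion_mono hN₂ (le_max_right _ _)
  -- e as a linear map
  set eL : M.Cok →ₗ[ℤ_[p]] M'.Cok :=
    { toFun := e
      map_add' := e.map_add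
      map_smul' := fun a x => addHom_lin e.toAddMonoidHom K hKA hKB a x } with heL
  -- lift along the quotient maps
  obtain ⟨ℓ, hℓ⟩ := Module.projective_lifting_property (LinearMap.range M'.mulVecLin).mkQ
    (eL ∘ₗ (LinearMap.range M.mulVecLin).mkQ) (Submodule.mkQ_surjective _)
  set V := LinearMap.toMatrix' ℓ with hV
  have hVap : ∀ x, V.mulVec x = ℓ x := by
    intro x; rw [hV, ← Matrix.toLin'_apply, Matrix.toLin'_toMatrix']
  have hlift : ∀ x : Fin n → ℤ_[p],
      (Submodule.Quotient.mk (V.mulVec x) : M'.Cok) = e (Submodule.Quotient.mk x) := by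
    intro x
    have := congrArg (fun f => f x) hℓ
    simp only [LinearMap.comp_apply, Submodule.mkQ_apply] at this
    rw [hVap]
    exact this
  -- surjectivity gives covering
  have hsup : ∀ y : Fin n → ℤ_[p], ∃ x z, V.mulVec x + M'.mulVec z = y := by
    intro y
    obtain ⟨w, hw⟩ := e.surjective (Submodule.Quotient.mk y)
    obtain ⟨x, rfl⟩ := Submodule.Quotient.mk_surjective _ w
    have hmk : (Submodule.Quotient.mk (V.mulVec x) : M'.Cok) = Submodule.Quotient.mk y := by
      rw [hlift, hw]
    obtain ⟨z, hz⟩ := (Submodule.Quotient.eq _).mp hmk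
    rw [Matrix.mulVecLin_apply] at hz
    refine ⟨x, -z, ?_⟩
    rw [Matrix.mulVec_neg, hz]
    abel
  obtain ⟨C, hC⟩ := exists_corr_padic V M' hsup
  set U₁ := V + M' * C with hU₁def
  have hU₁ : IsUnit U₁ := (Matrix.isUnit_iff_isUnit_det _).mpr hC
  set 𝒰 := hU₁.unit with h𝒰
  have h𝒰v : (𝒰 : Matrix (Fin n) (Fin n) ℤ_[p]) = U₁ := hU₁.unit_spec
  have hlift₁ : ∀ x : Fin n → ℤ_[p],
      e (Submodule.Quotient.mk x) = Submodule.Quotient.mk (U₁.mulVec x) := by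
    intro x
    rw [← hlift]
    apply (Submodule.Quotient.eq _).mpr
    refine ⟨-(C.mulVec x), ?_⟩
    rw [Matrix.mulVecLin_apply, Matrix.mulVec_neg, Matrix.mulVec_mulVec, hU₁def,
      Matrix.add_mulVec]
    abel
  set W : Matrix (Fin n) (Fin n) ℤ_[p] := ((𝒰⁻¹ : _ˣ) : Matrix (Fin n) (Fin n) ℤ_[p]) with hW
  refine ⟨W * M' * Wᵀ, ?_, ?_, ?_, ?_⟩
  · -- symmetric
    show (W * M' * Wᵀ)ᵀ = W * M' * Wᵀ
    rw [Matrix.transpose_mul, Matrix.transpose_mul, Matrix.transpose_transpose, hM's,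
      Matrix.mul_assoc]
  · -- nonzero determinant
    have hWdet : IsUnit W.det :=
      IsUnit.of_mul_eq_one _ (by rw [← Matrix.det_mul, 𝒰.inv_mul, Matrix.det_one])
    rw [Matrix.det_mul, Matrix.det_mul, Matrix.det_transpose]
    exact mul_ne_zero (mul_ne_zero hWdet.ne_zero hM'd) hWdet.ne_zero
  · -- congruent to M'
    refine ⟨𝒰, ?_⟩
    have h1 : (𝒰 : Matrix (Fin n) (Fin n) ℤ_[p]) * W = 1 := 𝒰.mul_inv
    have h2 : Wᵀ * ((𝒰 : Matrix (Fin n) (Fin n) ℤ_[p]))ᵀ = 1 := by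
      rw [← Matrix.transpose_mul, h1, Matrix.transpose_one]
    calc (𝒰 : Matrix (Fin n) (Fin n) ℤ_[p]) * (W * M' * Wᵀ) * ((𝒰 : Matrix _ _ ℤ_[p]))ᵀ
        = ((𝒰 : Matrix (Fin n) (Fin n) ℤ_[p]) * W) * M' * (Wᵀ * ((𝒰 : Matrix _ _ ℤ_[p]))ᵀ) := by
          simp only [Matrix.mul_assoc]
      _ = M' := by rw [h1, h2, Matrix.one_mul, Matrix.mul_one]
  · -- integrality
    have hqWU : qm W * qm U₁ = 1 := by
      rw [hW, ← qm_mul, ← h𝒰v, 𝒰.inv_mul, qm_one]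
    have hqUW : qm U₁ * qm W = 1 := by
      rw [hW, ← qm_mul, ← h𝒰v, 𝒰.mul_inv, qm_one]
    have hB : qm M' * (qm M')⁻¹ = 1 := Matrix.mul_nonsing_inv _ (qm_det_isUnit hM'd)
    have hMinv : (qm (W * M' * Wᵀ))⁻¹ = (qm U₁)ᵀ * (qm M')⁻¹ * qm U₁ := by
      apply Matrix.inv_eq_right_inv
      rw [qm_mul, qm_mul, qm_transpose]
      calc qm W * qm M' * (qm W)ᵀ * ((qm U₁)ᵀ * (qm M')⁻¹ * qm U₁)
          = qm W * qm M' * ((qm W)ᵀ * (qm U₁)ᵀ) * ((qm M')⁻¹ * qm U₁) := by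
            simp only [Matrix.mul_assoc]
        _ = qm W * (qm M' * (qm M')⁻¹) * qm U₁ := by
            rw [← Matrix.transpose_mul, hqUW, Matrix.transpose_one, Matrix.mul_one]
            simp only [Matrix.mul_assoc]
        _ = 1 := by rw [hB, Matrix.mul_one, hqWU]
    intro i j
    have hbound := he (Pi.single i 1) (Pi.single j 1)
      (U₁.mulVec (Pi.single i 1)) (U₁.mulVec (Pi.single j 1)) (hlift₁ _) (hlift₁ _)
    rw [pairVal_single, pairVal_single_mulVec] at hbound
    have : ((qm M)⁻¹ - (qm (W * M' * Wᵀ))⁻¹) i j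
        = (qm M)⁻¹ i j - ((qm U₁)ᵀ * (qm M')⁻¹ * qm U₁) i j := by
      rw [hMinv, Matrix.sub_apply]
    rw [this]
    exact hbound
end Main

/-- For nonsingular symmetric `M, M' ∈ Sym_n(ℤ_p)`, the paired cokernels are
isomorphic iff there is a nonsingular symmetric `M''` congruent to `M'` with
`M⁻¹ - (M'')⁻¹ ∈ Sym_n(ℤ_p)` (inverses over `ℚ_p`). -/
theorem stmt_0 {p : ℕ} [Fact p.Prime] {n : ℕ} (hn : 1 ≤ n)
    (M M' : Matrix (Fin n) (Fin n) ℤ_[p]) (hMs : M.IsSymm) (hM's : M'.IsSymm)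
    (hMd : M.det ≠ 0) (hM'd : M'.det ≠ 0) :
    PairedIso M M' ↔
      ∃ M'' : Matrix (Fin n) (Fin n) ℤ_[p], M''.IsSymm ∧ M''.det ≠ 0 ∧
        M''.Congruent M' ∧
        ∀ i j, ‖((M.map (fun a => (a : ℚ_[p])))⁻¹ - (M''.map (fun a => (a : ℚ_[p])))⁻¹) i j‖ ≤ 1 := by
  constructor
  · intro h
    obtain ⟨M'', h1, h2, h3, h4⟩ := forward_dir M M' hM's hMd hM'd h
    exact ⟨M'', h1, h2, h3, h4⟩
  · rintro ⟨M'', h1, h2, h3, h4⟩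
    exact backward_dir M M' hMs hM's hMd hM'd M'' h1 h2 h3 h4
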